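/- arXiv:2502.09871 — 2 statements merged into one kernel-verified Lean document; each statement's English description precedes it below -/
import Mathlib

section
/- Let E be a metric space, δ > 0, 0 < ε < 1, and let γ : [0, L] → E be a curve parametrized by arc length satisfying the large-scale invertibility condition: d(γ(s), γ(t)) > ε·min(|s−t|, L−|s−t|) whenever min(|s−t|, L−|s−t|) ≥ δ (using the circle distance d_γ(s,t) = min(|s−t|, L−|s−t|)). Then for all x ∈ E and r ≥ δ/2, the Lebesgue measure of {t ∈ [0, L] : d(x, γ(t)) ≤ r} is at most 4(1 + ε⁻¹)·r. -/
open MeasureTheory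

/-- Large-scale invertibility implies the ball growth condition for radii `r ≥ δ/2`. -/
theorem stmt3 {E : Type*} [MetricSpace E] (L δ ε : ℝ)
    (hδ : 0 < δ) (hε0 : 0 < ε) (hε1 : ε < 1) (hL : 0 ≤ L)
    (γ : ℝ → E) (hlip : LipschitzOnWith 1 γ (Set.Icc 0 L))
    (hlsi : ∀ s ∈ Set.Icc (0:ℝ) L, ∀ t ∈ Set.Icc (0:ℝ) L,
      δ ≤ min |s - t| (L - |s - t|) →
        ε * min |s - t| (L - |s - t|) < dist (γ s) (γ t)) :
    ∀ x : E, ∀ r : ℝ, δ / 2 ≤ r →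
      volume {t ∈ Set.Icc (0:ℝ) L | dist x (γ t) ≤ r}
        ≤ ENNReal.ofReal (4 * (1 + ε⁻¹) * r) := by
  intro x r hr
  set S := {t ∈ Set.Icc (0:ℝ) L | dist x (γ t) ≤ r} with hSdef
  have hr0 : 0 < r := lt_of_lt_of_le (by linarith) hr
  have hrε : 0 ≤ 2 * r / ε := by positivity
  rcases Set.eq_empty_or_nonempty S with hemp | ⟨s, hs⟩
  · rw [hemp]; simp
  · obtain ⟨⟨hs0, hsL⟩, hsd⟩ := hs
    obtain ⟨D, hD⟩ : ∃ D : ℝ, D = 2 * r + 2 * r / ε := ⟨_, rfl⟩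
    have hD0 : 0 < D := by rw [hD]; positivity
    have hD2 : 2 * r / ε ≤ D := by rw [hD]; linarith
    have hDr : 2 * r ≤ D := by rw [hD]; linarith
    have key : ∀ t ∈ S, min |s - t| (L - |s - t|) ≤ D := by
      rintro t ⟨htI, htd⟩
      by_cases hm : δ ≤ min |s - t| (L - |s - t|)
      · have hlt := hlsi s ⟨hs0, hsL⟩ t htI hm
        have h2 : dist (γ s) (γ t) ≤ 2 * r := by
          calc dist (γ s) (γ t) ≤ dist (γ s) x + dist x (γ t) := dist_triangle _ _ _
            _ ≤ r + r := by
                rw [dist_comm (γ s) x]; exact add_le_add hsd htd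
            _ = 2 * r := by ring
        have h3 : ε * min |s - t| (L - |s - t|) < 2 * r := lt_of_lt_of_le hlt h2
        have h4 : min |s - t| (L - |s - t|) < 2 * r / ε := by
          rw [lt_div_iff₀ hε0]
          linarith [mul_comm ε (min |s - t| (L - |s - t|))]
        linarith
      · push_neg at hm
        have : δ ≤ 2 * r := by linarith
        linarith
    -- cover S by three intervals
    have hsub : S ⊆ Set.Icc (max 0 (s - D)) (min L (s + D)) ∪
        (Set.Icc (s + L - D) L ∪ Set.Icc 0 (s - L + D)) := by
      rintro t ht
      have hm := key t ht
      obtain ⟨⟨ht0, htL⟩, -⟩ := ht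
      rcases min_le_iff.mp hm with h | h
      · obtain ⟨h1, h2⟩ := abs_le.mp h
        left
        exact ⟨max_le ht0 (by linarith), le_min htL (by linarith)⟩
      · have habs : L - D ≤ |s - t| := by linarith
        rcases le_total t s with hts | hts
        · right; right
          rw [abs_of_nonneg (by linarith : (0:ℝ) ≤ s - t)] at habs
          exact ⟨ht0, by linarith⟩
        · right; left
          rw [abs_of_nonpos (by linarith : s - t ≤ 0)] at habs
          exact ⟨by linarith, htL⟩
    have hvol : volume S ≤ ENNReal.ofReal (min L (s + D) - max 0 (s - D)) +
        (ENNReal.ofReal (D - s) + ENNReal.ofReal (s - L + D)) := by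
      calc volume S ≤ _ := measure_mono hsub
        _ ≤ volume (Set.Icc (max 0 (s - D)) (min L (s + D))) +
            (volume (Set.Icc (s + L - D) L) + volume (Set.Icc 0 (s - L + D))) :=
          le_trans (measure_union_le _ _) (add_le_add_right (measure_union_le _ _) _)
        _ = _ := by
          rw [Real.volume_Icc, Real.volume_Icc, Real.volume_Icc,
            show L - (s + L - D) = D - s by ring, show s - L + D - 0 = s - L + D by ring]
    refine le_trans hvol ?_
    calc ENNReal.ofReal (min L (s + D) - max 0 (s - D)) +
        (ENNReal.ofReal (D - s) + ENNReal.ofReal (s - L + D))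
        ≤ ENNReal.ofReal (max (min L (s + D) - max 0 (s - D)) 0) +
          (ENNReal.ofReal (max (D - s) 0) + ENNReal.ofReal (max (s - L + D) 0)) :=
          add_le_add (ENNReal.ofReal_le_ofReal (le_max_left _ _))
            (add_le_add (ENNReal.ofReal_le_ofReal (le_max_left _ _))
              (ENNReal.ofReal_le_ofReal (le_max_left _ _)))
      _ = ENNReal.ofReal (max (min L (s + D) - max 0 (s - D)) 0 +
          (max (D - s) 0 + max (s - L + D) 0)) := by
          rw [← ENNReal.ofReal_add (le_max_right _ _) (le_max_right _ _),
            ← ENNReal.ofReal_add (le_max_right _ _)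
              (add_nonneg (le_max_right _ _) (le_max_right _ _))]
      _ ≤ ENNReal.ofReal (4 * (1 + ε⁻¹) * r) := by
          apply ENNReal.ofReal_le_ofReal
          have hx1 : min L (s + D) ≤ s + D := min_le_right _ _
          have hx2 : min L (s + D) ≤ L := min_le_left _ _
          have ha1 : (0:ℝ) ≤ max 0 (s - D) := le_max_left _ _
          have ha2 : s - D ≤ max 0 (s - D) := le_max_right _ _
          have htarget : 4 * (1 + ε⁻¹) * r = 2 * D := by rw [hD]; ring
          rw [htarget]
          rcases le_total (D - s) 0 with h1 | h1 <;>
            rcases le_total (s - L + D) 0 with h2 | h2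
          · rw [max_eq_right h1, max_eq_right h2]
            have hA : min L (s + D) - max 0 (s - D) ≤ 2 * D := by linarith
            have h0 : (0:ℝ) ≤ 2 * D := by linarith
            simpa using max_le hA h0
          · rw [max_eq_right h1, max_eq_left h2]
            have : max (min L (s + D) - max 0 (s - D)) 0 ≤ L - s + D :=
              max_le (by linarith) (by linarith)
            linarith
          · rw [max_eq_left h1, max_eq_right h2]
            have : max (min L (s + D) - max 0 (s - D)) 0 ≤ s + D :=
              max_le (by linarith) (by linarith)
            linarith
          · rw [max_eq_left h1, max_eq_left h2]
            have : max (min L (s + D) - max 0 (s - D)) 0 ≤ L :=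
              max_le (by linarith) hL
            linarith
end

section
/- Let γ : [0, L] → E be a Lipschitz curve parametrized by arc length, f : E → ℝ bounded Lipschitz with ‖f‖_∞ ≤ C and Lip(f) ≤ C, and π, π' : E → ℝ Lipschitz with Lip(π), Lip(π') ≤ C. Let Q ⊆ E be a finite set with sup_{q∈Q} |π(q) − π'(q)| ≤ ε, fix m ∈ ℕ, and set s_i = iL/m. Then |∫₀^L f(γ(t)) d((π−π')∘γ)(t)| ≤ C·∑_{i=1}^m min{2CL/m, 2ε + 2C(d(γ(s_i), Q) + d(γ(s_{i−1}), Q))} + 2C²L²/m, where d(x, Q) = min_{q∈Q} d(x, q). -/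
open MeasureTheory Filter Set intervalIntegral Topology NNReal

lemma abs_deriv_le_of_lip {K : ℝ≥0} {g : ℝ → ℝ} (hg : LipschitzWith K g) (t : ℝ) :
    |deriv g t| ≤ K := by
  have h1 : ‖fderiv ℝ g t‖ ≤ K := norm_fderiv_le_of_lipschitz ℝ hg
  have h2 : deriv g t = fderiv ℝ g t 1 := rfl
  calc |deriv g t| = ‖fderiv ℝ g t 1‖ := by rw [h2]; exact (Real.norm_eq_abs _).symm
    _ ≤ ‖fderiv ℝ g t‖ * ‖(1:ℝ)‖ := ContinuousLinearMap.le_opNorm _ _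
    _ ≤ K := by simpa using h1

lemma lip_intervalIntegrable_deriv {K : ℝ≥0} {g : ℝ → ℝ} (hg : LipschitzWith K g)
    (a b : ℝ) : IntervalIntegrable (deriv g) volume a b := by
  refine intervalIntegrable_iff.2 ?_
  have hconst : IntegrableOn (fun _ : ℝ => (K:ℝ)) (Set.uIoc a b) volume :=
    integrableOn_const measure_Ioc_lt_top.ne
  refine Integrable.mono' hconst ((measurable_deriv g).aestronglyMeasurable.restrict) ?_
  filter_upwards with t
  simpa [Real.norm_eq_abs] using abs_deriv_le_of_lip hg t

lemma lip_integral_deriv {K : ℝ≥0} {g : ℝ → ℝ} (hg : LipschitzWith K g) (a b : ℝ) :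
    ∫ t in a..b, deriv g t = g b - g a := by
  have hgc : Continuous g := hg.continuous
  have hgi : ∀ c d : ℝ, IntervalIntegrable g volume c d := fun c d => hgc.intervalIntegrable c d
  set u : ℕ → ℝ := fun n => (1:ℝ)/(n+1) with hu_def
  have hu_pos : ∀ n, 0 < u n := fun n => by positivity
  have hmul : ∀ n : ℕ, ((n:ℝ)+1) * u n = 1 := fun n => by
    have : (n:ℝ) + 1 ≠ 0 := by positivity
    simp only [hu_def]; field_simp
  have hu_lim : Tendsto u atTop (𝓝 0) := tendsto_one_div_add_atTop_nhds_zero_nat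
  -- key pointwise averaging estimate
  have key : ∀ (x : ℝ) (n : ℕ), |((n:ℝ)+1) * (∫ t in x..(x + u n), g t) - g x| ≤ K * u n := by
    intro x n
    have hsub : (∫ t in x..(x + u n), (g t - g x)) = (∫ t in x..(x + u n), g t) - u n * g x := by
      rw [intervalIntegral.integral_sub (hgi _ _) (intervalIntegrable_const)]
      simp [intervalIntegral.integral_const, smul_eq_mul]
    have hbound : ‖∫ t in x..(x + u n), (g t - g x)‖ ≤ (K * u n) * |(x + u n) - x| := by
      apply intervalIntegral.norm_integral_le_of_norm_le_const
      intro t ht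
      rw [Set.uIoc_of_le (by linarith [hu_pos n])] at ht
      have h1 : |g t - g x| ≤ K * |t - x| := by
        simpa [Real.dist_eq] using hg.dist_le_mul t x
      have h2 : |t - x| ≤ u n := by
        rw [abs_of_pos (by linarith [ht.1])]
        linarith [ht.2]
      calc ‖g t - g x‖ = |g t - g x| := rfl
        _ ≤ K * |t - x| := h1
        _ ≤ K * u n := mul_le_mul_of_nonneg_left h2 K.coe_nonneg
    have habs : |(x + u n) - x| = u n := by rw [abs_of_pos (by linarith [hu_pos n])]; ring_nf
    have h3 : ((n:ℝ)+1) * (∫ t in x..(x + u n), g t) - g x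
        = ((n:ℝ)+1) * (∫ t in x..(x + u n), (g t - g x)) := by
      rw [hsub, mul_sub, ← mul_assoc, hmul n, one_mul]
    rw [h3, abs_mul, abs_of_pos (show (0:ℝ) < (n:ℝ)+1 by positivity)]
    calc ((n:ℝ)+1) * |∫ t in x..(x + u n), (g t - g x)|
        ≤ ((n:ℝ)+1) * ((K * u n) * (u n)) := by
          apply mul_le_mul_of_nonneg_left _ (by positivity)
          simpa [Real.norm_eq_abs, habs, abs_of_pos (hu_pos n)] using hbound
      _ = (K * u n) * (((n:ℝ)+1) * u n) := by ring
      _ = K * u n := by rw [hmul n, mul_one]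
  set F : ℕ → ℝ → ℝ := fun n t => (g (t + u n) - g t) * ((n:ℝ)+1) with hF_def
  -- integral of F n
  have hFint : ∀ n, (∫ t in a..b, F n t)
      = ((n:ℝ)+1) * ((∫ t in b..(b + u n), g t) - ∫ t in a..(a + u n), g t) := by
    intro n
    have hgi' : IntervalIntegrable (fun t : ℝ => g (t + u n)) volume a b :=
      (hgc.comp (continuous_add_right (u n))).intervalIntegrable a b
    have h1 : (∫ t in a..b, F n t) = ((∫ t in a..b, g (t + u n)) - ∫ t in a..b, g t) * ((n:ℝ)+1) := by
      simp only [hF_def]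
      rw [intervalIntegral.integral_mul_const, intervalIntegral.integral_sub hgi' (hgi a b)]
    have h2 : (∫ t in a..b, g (t + u n)) = ∫ t in (a + u n)..(b + u n), g t :=
      intervalIntegral.integral_comp_add_right g (u n)
    have h3 : (∫ t in a..(a + u n), g t) + (∫ t in (a + u n)..(b + u n), g t)
        = ∫ t in a..(b + u n), g t := intervalIntegral.integral_add_adjacent_intervals (hgi _ _) (hgi _ _)
    have h4 : (∫ t in a..b, g t) + (∫ t in b..(b + u n), g t)
        = ∫ t in a..(b + u n), g t := intervalIntegral.integral_add_adjacent_intervals (hgi _ _) (hgi _ _)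
    rw [h1, h2]
    linear_combination ((n:ℝ)+1) * h3 - ((n:ℝ)+1) * h4
  -- step 3 : limit of integrals is g b - g a
  have step3 : Tendsto (fun n => ∫ t in a..b, F n t) atTop (𝓝 (g b - g a)) := by
    rw [tendsto_iff_dist_tendsto_zero]
    apply squeeze_zero (fun n => dist_nonneg) (g := fun n => 2 * K * u n)
    · intro n
      rw [Real.dist_eq, hFint n]
      have k1 := key b n
      have k2 := key a n
      calc |((n:ℝ)+1) * ((∫ t in b..(b + u n), g t) - ∫ t in a..(a + u n), g t) - (g b - g a)|
          = |(((n:ℝ)+1) * (∫ t in b..(b + u n), g t) - g b)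
              - (((n:ℝ)+1) * (∫ t in a..(a + u n), g t) - g a)| := by ring_nf
        _ ≤ |((n:ℝ)+1) * (∫ t in b..(b + u n), g t) - g b|
              + |((n:ℝ)+1) * (∫ t in a..(a + u n), g t) - g a| := abs_sub _ _
        _ ≤ 2 * K * u n := by linarith
    · simpa only [mul_zero] using hu_lim.const_mul (2 * (K:ℝ))
  -- step 4 : dominated convergence
  have step4 : Tendsto (fun n => ∫ t in a..b, F n t) atTop (𝓝 (∫ t in a..b, deriv g t)) := by
    apply intervalIntegral.tendsto_integral_filter_of_dominated_convergence (fun _ => (K:ℝ))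
    · filter_upwards with n
      exact ((hgc.comp (by continuity)).sub hgc |>.mul continuous_const).aestronglyMeasurable.restrict
    · filter_upwards with n
      filter_upwards with t _
      have h1 : |g (t + u n) - g t| ≤ K * u n := by
        have := hg.dist_le_mul (t + u n) t
        simpa [Real.dist_eq, abs_of_pos (hu_pos n)] using this
      simp only [hF_def, Real.norm_eq_abs, abs_mul,
        abs_of_pos (show (0:ℝ) < (n:ℝ)+1 by positivity)]
      calc |g (t + u n) - g t| * ((n:ℝ)+1)
          ≤ (K * u n) * ((n:ℝ)+1) := mul_le_mul_of_nonneg_right h1 (by positivity)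
        _ = (K:ℝ) * (((n:ℝ)+1) * u n) := by ring
        _ = K := by rw [hmul n, mul_one]
    · exact intervalIntegrable_const
    · filter_upwards [hg.ae_differentiableAt_real] with t ht _
      have hd : HasDerivAt g (deriv g t) t := ht.hasDerivAt
      rw [hasDerivAt_iff_tendsto_slope] at hd
      have hseq : Tendsto (fun n => t + u n) atTop (𝓝[≠] t) := by
        apply tendsto_nhdsWithin_of_tendsto_nhds_of_eventually_within
        · simpa using tendsto_const_nhds.add hu_lim
        · filter_upwards with n
          simp only [Set.mem_compl_iff, Set.mem_singleton_iff]
          intro h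
          have := hu_pos n
          nlinarith [congrArg (· - t) h]
      have := hd.comp hseq
      convert this using 2 with n
      simp only [Function.comp_apply, slope_def_field, hF_def]
      have ht' : t + u n - t = u n := by ring
      rw [ht']
      have hinv : (u n)⁻¹ = (n:ℝ) + 1 := by
        rw [hu_def]; simp only [one_div, inv_inv]
      rw [div_eq_mul_inv, hinv]
  exact tendsto_nhds_unique step4 step3

/-- Quantitative estimate for the action of the current of a curve on `(f, π − π')`,
in terms of the distances of sample points to a finite set `Q` on which `π` and `π'`
are `ε`-close. -/
theorem stmt11 {E : Type*} [MetricSpace E]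
    (L C ε : ℝ) (hL : 0 ≤ L) (hC : 0 ≤ C) (hε : 0 ≤ ε)
    (γ : ℝ → E) (hγ : LipschitzOnWith 1 γ (Set.Icc 0 L))
    (f π π' : E → ℝ)
    (hfb : ∀ x, |f x| ≤ C) (hfl : ∀ x y, |f x - f y| ≤ C * dist x y)
    (hπ : ∀ x y, |π x - π y| ≤ C * dist x y)
    (hπ' : ∀ x y, |π' x - π' y| ≤ C * dist x y)
    (Q : Set E) (hQfin : Q.Finite) (hQne : Q.Nonempty)
    (hεQ : ∀ q ∈ Q, |π q - π' q| ≤ ε)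
    (m : ℕ) (hm : 0 < m) (s : ℕ → ℝ) (hs : ∀ i, s i = (i : ℝ) * L / m) :
    |∫ t in (0:ℝ)..L, f (γ t) * deriv (fun u => π (γ u) - π' (γ u)) t|
      ≤ C * ∑ i ∈ Finset.Icc 1 m,
          min (2 * C * L / m)
            (2 * ε + 2 * C * (Metric.infDist (γ (s i)) Q + Metric.infDist (γ (s (i - 1))) Q))
        + 2 * C ^ 2 * L ^ 2 / m := by
  have hm' : (m:ℝ) ≠ 0 := Nat.cast_ne_zero.2 hm.ne'
  have hmpos : (0:ℝ) < m := Nat.cast_pos.2 hm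
  set δ : ℝ := L / m with hδ_def
  have hδ0 : 0 ≤ δ := by positivity
  set h : ℝ → ℝ := fun u => π (γ u) - π' (γ u) with hh_def
  set K : ℝ≥0 := (2*C).toNNReal with hK_def
  have hKcoe : (K:ℝ) = 2*C := Real.coe_toNNReal _ (by positivity)
  have hγd : ∀ x ∈ Set.Icc 0 L, ∀ y ∈ Set.Icc 0 L, dist (γ x) (γ y) ≤ dist x y := by
    intro x hx y hy; simpa using hγ.dist_le_mul x hx y hy
  have hlipOn : LipschitzOnWith K h (Set.Icc 0 L) := by
    apply LipschitzOnWith.of_dist_le_mul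
    intro x hx y hy
    have hd := hγd x hx y hy
    have h1 := hπ (γ x) (γ y)
    have h2 := hπ' (γ x) (γ y)
    rw [Real.dist_eq, Real.dist_eq, hKcoe]
    have e : h x - h y = (π (γ x) - π (γ y)) - (π' (γ x) - π' (γ y)) := by
      simp only [hh_def]; ring
    calc |h x - h y| ≤ |π (γ x) - π (γ y)| + |π' (γ x) - π' (γ y)| := by
          rw [e]; exact abs_sub _ _
      _ ≤ C * dist (γ x) (γ y) + C * dist (γ x) (γ y) := add_le_add h1 h2
      _ ≤ 2 * C * |x - y| := by
          rw [← Real.dist_eq]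
          nlinarith [(dist_nonneg : (0:ℝ) ≤ dist (γ x) (γ y))]
  obtain ⟨g, hglip, heq⟩ := hlipOn.extend_real
  -- basic facts about s
  have hs0 : s 0 = 0 := by simp [hs 0]
  have hsm : s m = L := by rw [hs m]; field_simp
  have hsle : ∀ i j : ℕ, i ≤ j → s i ≤ s j := by
    intro i j hij
    rw [hs, hs]
    have : (i:ℝ) ≤ j := by exact_mod_cast hij
    gcongr
  have hsmem : ∀ i, i ≤ m → s i ∈ Set.Icc 0 L := by
    intro i hi
    constructor
    · rw [hs]; positivity
    · rw [← hsm]; exact hsle i m hi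
  have hsdiff : ∀ i : ℕ, s (i+1) - s i = δ := by
    intro i; rw [hs, hs, hδ_def]; push_cast; field_simp; ring
  -- bound for |h x| via Q
  have hhx : ∀ x ∈ Set.Icc 0 L, |h x| ≤ ε + 2 * C * Metric.infDist (γ x) Q := by
    intro x _
    obtain ⟨q, hqQ, hq⟩ := hQfin.isCompact.exists_infDist_eq_dist hQne (γ x)
    have e : h x = (π (γ x) - π q) + (π q - π' q) + (π' q - π' (γ x)) := by
      simp only [hh_def]; ring
    have b1 := hπ (γ x) q
    have b2 := hεQ q hqQ
    have b3 : |π' q - π' (γ x)| ≤ C * dist (γ x) q := by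
      rw [dist_comm]; exact hπ' q (γ x)
    calc |h x| ≤ |π (γ x) - π q| + |π q - π' q| + |π' q - π' (γ x)| := by
          rw [e]; exact (abs_add_le _ _).trans (add_le_add_left (abs_add_le _ _) _)
      _ ≤ C * dist (γ x) q + ε + C * dist (γ x) q := add_le_add (add_le_add b1 b2) b3
      _ = ε + 2 * C * Metric.infDist (γ x) Q := by rw [hq]; ring
  -- replace deriv h by deriv g in the integral
  have hcongr : (∫ t in (0:ℝ)..L, f (γ t) * deriv h t)
      = ∫ t in (0:ℝ)..L, f (γ t) * deriv g t := by
    apply intervalIntegral.integral_congr_ae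
    have hLnull : ({L} : Set ℝ)ᶜ ∈ ae volume := compl_mem_ae_iff.2 (measure_singleton L)
    filter_upwards [hLnull] with x hx hmem
    rw [Set.uIoc_of_le hL] at hmem
    have hx' : x ∈ Set.Ioo 0 L := ⟨hmem.1, lt_of_le_of_ne hmem.2 hx⟩
    have hfe : h =ᶠ[𝓝 x] g := by
      filter_upwards [Icc_mem_nhds hx'.1 hx'.2] with y hy using heq hy
    rw [hfe.deriv_eq]
  rw [hcongr]
  -- integrability of the pieces
  have hderiv_int : ∀ c d : ℝ, IntervalIntegrable (deriv g) volume c d :=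
    fun c d => lip_intervalIntegrable_deriv hglip c d
  have hfc : Continuous f := by
    have : LipschitzWith C.toNNReal f := by
      apply LipschitzWith.of_dist_le_mul
      intro x y
      rw [Real.dist_eq, Real.coe_toNNReal _ hC]
      exact hfl x y
    exact this.continuous
  have hfγcont : ContinuousOn (fun t => f (γ t)) (Set.Icc 0 L) :=
    hfc.comp_continuousOn hγ.continuousOn
  have hpieceInt : ∀ k, k < m →
      IntervalIntegrable (fun t => f (γ t) * deriv g t) volume (s k) (s (k+1)) := by
    intro k hk
    rw [intervalIntegrable_iff]
    have hsub : Set.uIoc (s k) (s (k+1)) ⊆ Set.Icc 0 L := by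
      rw [Set.uIoc_of_le (hsle k (k+1) k.le_succ)]
      exact Set.Ioc_subset_Icc_self.trans
        (Set.Icc_subset_Icc (hsmem k hk.le).1 (hsmem (k+1) hk).2)
    have hmeas : AEStronglyMeasurable (fun t => f (γ t) * deriv g t)
        (volume.restrict (Set.uIoc (s k) (s (k+1)))) := by
      exact ((hfγcont.mono hsub).aestronglyMeasurable measurableSet_uIoc).mul
        ((measurable_deriv g).aestronglyMeasurable.restrict)
    have hconst : IntegrableOn (fun _ : ℝ => C * (2*C)) (Set.uIoc (s k) (s (k+1))) volume :=
      integrableOn_const measure_Ioc_lt_top.ne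
    refine Integrable.mono' hconst hmeas ?_
    filter_upwards with t
    rw [Real.norm_eq_abs, abs_mul]
    have hd : |deriv g t| ≤ 2*C := by
      have := abs_deriv_le_of_lip hglip t; rwa [hKcoe] at this
    exact mul_le_mul (hfb _) hd (abs_nonneg _) hC
  -- splitting
  have hsplit := intervalIntegral.sum_integral_adjacent_intervals hpieceInt
  rw [hs0, hsm] at hsplit
  rw [← hsplit]
  -- per-interval estimate
  have hpiece : ∀ k, k < m → |∫ t in (s k)..(s (k+1)), f (γ t) * deriv g t|
      ≤ C * min (2 * C * L / m)
          (2 * ε + 2 * C * (Metric.infDist (γ (s (k+1))) Q + Metric.infDist (γ (s k)) Q))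
        + 2 * C^2 * δ^2 := by
    intro k hk
    set a := s k with ha_def
    set b := s (k+1) with hb_def
    have hab : a ≤ b := hsle k (k+1) k.le_succ
    have hba : b - a = δ := hsdiff k
    have haI : a ∈ Set.Icc 0 L := hsmem k hk.le
    have hbI : b ∈ Set.Icc 0 L := hsmem (k+1) hk
    have e1 : IntervalIntegrable (fun t => f (γ b) * deriv g t) volume a b :=
      (hderiv_int a b).const_mul _
    have e2 := hpieceInt k hk
    have hdecomp : (∫ t in a..b, f (γ t) * deriv g t)
        = (∫ t in a..b, (f (γ t) - f (γ b)) * deriv g t) + f (γ b) * (g b - g a) := by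
      have : (fun t => (f (γ t) - f (γ b)) * deriv g t)
          = (fun t => f (γ t) * deriv g t - f (γ b) * deriv g t) := by ext t; ring
      rw [this, intervalIntegral.integral_sub e2 e1,
        intervalIntegral.integral_const_mul, lip_integral_deriv hglip a b]
      ring
    have hbound1 : |∫ t in a..b, (f (γ t) - f (γ b)) * deriv g t| ≤ 2 * C^2 * δ^2 := by
      have hb2 : ‖∫ t in a..b, (f (γ t) - f (γ b)) * deriv g t‖ ≤ (C * δ * (2*C)) * |b - a| := by
        apply intervalIntegral.norm_integral_le_of_norm_le_const
        intro t ht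
        rw [Set.uIoc_of_le hab] at ht
        have htI : t ∈ Set.Icc 0 L := ⟨le_trans haI.1 ht.1.le, le_trans ht.2 hbI.2⟩
        have hfd : |f (γ t) - f (γ b)| ≤ C * δ := by
          calc |f (γ t) - f (γ b)| ≤ C * dist (γ t) (γ b) := hfl _ _
            _ ≤ C * dist t b := by
                have := hγd t htI b hbI
                nlinarith
            _ ≤ C * δ := by
                rw [Real.dist_eq, abs_of_nonpos (by linarith [ht.2])]
                have : -(t - b) ≤ δ := by linarith [ht.1]
                nlinarith
        have hdg : |deriv g t| ≤ 2*C := by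
          have := abs_deriv_le_of_lip hglip t; rwa [hKcoe] at this
        rw [Real.norm_eq_abs, abs_mul]
        exact mul_le_mul hfd hdg (abs_nonneg _) (by positivity)
      rw [Real.norm_eq_abs] at hb2
      calc |∫ t in a..b, (f (γ t) - f (γ b)) * deriv g t| ≤ (C * δ * (2*C)) * |b - a| := hb2
        _ = 2 * C^2 * δ^2 := by rw [hba, abs_of_nonneg hδ0]; ring
    have hgdiff : |g b - g a|
        ≤ min (2 * C * L / m)
          (2 * ε + 2 * C * (Metric.infDist (γ b) Q + Metric.infDist (γ a) Q)) := by
      refine le_min ?_ ?_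
      · have := hglip.dist_le_mul b a
        rw [Real.dist_eq, Real.dist_eq, hKcoe] at this
        calc |g b - g a| ≤ 2*C * |b - a| := this
          _ = 2 * C * L / m := by rw [hba, abs_of_nonneg hδ0, hδ_def]; ring
      · rw [← heq haI, ← heq hbI]
        calc |h b - h a| ≤ |h b| + |h a| := abs_sub _ _
          _ ≤ (ε + 2 * C * Metric.infDist (γ b) Q) + (ε + 2 * C * Metric.infDist (γ a) Q) :=
              add_le_add (hhx b hbI) (hhx a haI)
          _ = 2 * ε + 2 * C * (Metric.infDist (γ b) Q + Metric.infDist (γ a) Q) := by ring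
    have hmin0 : 0 ≤ min (2 * C * L / m)
        (2 * ε + 2 * C * (Metric.infDist (γ b) Q + Metric.infDist (γ a) Q)) :=
      by
        have h1 : 0 ≤ Metric.infDist (γ b) Q := Metric.infDist_nonneg
        have h2 : 0 ≤ Metric.infDist (γ a) Q := Metric.infDist_nonneg
        exact le_min (by positivity) (by nlinarith)
    calc |∫ t in a..b, f (γ t) * deriv g t|
        ≤ |∫ t in a..b, (f (γ t) - f (γ b)) * deriv g t| + |f (γ b) * (g b - g a)| := by
          rw [hdecomp]; exact abs_add_le _ _
      _ ≤ 2 * C^2 * δ^2 + C * min (2 * C * L / m)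
            (2 * ε + 2 * C * (Metric.infDist (γ b) Q + Metric.infDist (γ a) Q)) := by
          refine add_le_add hbound1 ?_
          rw [abs_mul]
          exact mul_le_mul (hfb _) hgdiff (abs_nonneg _) hC
      _ = _ := by ring
  -- summing up
  have habs : |∑ k ∈ Finset.range m, ∫ t in (s k)..(s (k+1)), f (γ t) * deriv g t|
      ≤ ∑ k ∈ Finset.range m,
          (C * min (2 * C * L / m)
            (2 * ε + 2 * C * (Metric.infDist (γ (s (k+1))) Q + Metric.infDist (γ (s k)) Q))
          + 2 * C^2 * δ^2) := by
    refine (Finset.abs_sum_le_sum_abs _ _).trans (Finset.sum_le_sum ?_)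
    intro k hk
    exact hpiece k (Finset.mem_range.1 hk)
  refine habs.trans ?_
  rw [Finset.sum_add_distrib, Finset.sum_const, Finset.card_range, ← Finset.mul_sum]
  have hsum_eq : (∑ i ∈ Finset.Icc 1 m,
      min (2 * C * L / m)
        (2 * ε + 2 * C * (Metric.infDist (γ (s i)) Q + Metric.infDist (γ (s (i - 1))) Q)))
      = ∑ k ∈ Finset.range m,
        min (2 * C * L / m)
          (2 * ε + 2 * C * (Metric.infDist (γ (s (k+1))) Q + Metric.infDist (γ (s k)) Q)) := by
    rw [← Finset.Ico_add_one_right_eq_Icc, Finset.sum_Ico_eq_sum_range]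
    apply Finset.sum_congr (by norm_num)
    intro k _
    have e1 : 1 + k = k + 1 := Nat.add_comm 1 k
    simp [e1]
  rw [hsum_eq]
  have hlast : (m : ℝ) * (2 * C^2 * δ^2) = 2 * C ^ 2 * L ^ 2 / m := by
    rw [hδ_def]
    field_simp
  rw [nsmul_eq_mul, hlast]
end
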